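/- Let G be a finite group acting linearly on a finite-dimensional vector space V over a field K. Then the algebra of G-invariant polynomial functions K[V]^G is a finitely generated K-algebra. -/

import Mathlib

open MvPolynomial

noncomputable def hnSub {K : Type*} [CommRing K] {d : ℕ} (M : Matrix (Fin d) (Fin d) K) :
    MvPolynomial (Fin d) K →ₐ[K] MvPolynomial (Fin d) K :=
  aeval (fun j : Fin d => ∑ k : Fin d, C (M j k) * X k)

theorem hnSub_comp {K : Type*} [CommRing K] {d : ℕ} (M N : Matrix (Fin d) (Fin d) K) :
    (hnSub M).comp (hnSub N) = hnSub (N * M) := by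
  apply MvPolynomial.algHom_ext
  intro j
  simp only [hnSub, AlgHom.comp_apply, aeval_X, map_sum, map_mul, aeval_C, Matrix.mul_apply]
  simp only [Finset.mul_sum, Finset.sum_mul, algebraMap_eq]
  rw [Finset.sum_comm]
  simp [mul_assoc]

theorem hnSub_one {K : Type*} [CommRing K] {d : ℕ} :
    hnSub (1 : Matrix (Fin d) (Fin d) K) = AlgHom.id K _ := by
  apply MvPolynomial.algHom_ext
  intro j
  simp [hnSub, Matrix.one_apply, Finset.sum_ite_eq]

set_option maxHeartbeats 1000000 in
theorem stmt_11 {K : Type*} [Field K] {d : ℕ} {G : Type*} [Group G] [Finite G]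
    (ρ : G →* Matrix.GeneralLinearGroup (Fin d) K) :
    ∃ s : Finset (MvPolynomial (Fin d) K),
      (∀ Q ∈ s, ∀ g : G,
        aeval (fun j : Fin d =>
          ∑ k : Fin d, C ((ρ g : Matrix (Fin d) (Fin d) K) j k) * X k) Q = Q) ∧
      (∀ P : MvPolynomial (Fin d) K,
        (∀ g : G,
          aeval (fun j : Fin d =>
            ∑ k : Fin d, C ((ρ g : Matrix (Fin d) (Fin d) K) j k) * X k) P = P)
        → P ∈ Algebra.adjoin K (s : Set (MvPolynomial (Fin d) K))) := by
  classical
  cases nonempty_fintype G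
  set R := MvPolynomial (Fin d) K with hR
  -- the action of `G` on `R`: `g • P = hnSub (ρ g⁻¹) P`
  have key : ∀ g h : G, ∀ P : R,
      hnSub (K := K) ((ρ g : Matrix (Fin d) (Fin d) K)) (hnSub ((ρ h : Matrix (Fin d) (Fin d) K)) P)
        = hnSub ((ρ h : Matrix (Fin d) (Fin d) K) * (ρ g : Matrix (Fin d) (Fin d) K)) P := by
    intro g h P
    have := congrArg (fun f => f P) (hnSub_comp (K := K)
      ((ρ g : Matrix (Fin d) (Fin d) K)) ((ρ h : Matrix (Fin d) (Fin d) K)))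
    simpa using this
  letI : SMul G R := ⟨fun g P => hnSub ((ρ g⁻¹ : Matrix (Fin d) (Fin d) K)) P⟩
  have smul_def : ∀ (g : G) (P : R),
      g • P = hnSub ((ρ g⁻¹ : Matrix (Fin d) (Fin d) K)) P := fun _ _ => rfl
  letI : MulSemiringAction G R :=
    { smul := fun g P => hnSub ((ρ g⁻¹ : Matrix (Fin d) (Fin d) K)) P
      one_smul := by
        intro P
        show hnSub ((ρ 1⁻¹ : Matrix (Fin d) (Fin d) K)) P = P
        simp [hnSub_one]
      mul_smul := by
        intro g h P
        show hnSub ((ρ (g*h)⁻¹ : Matrix (Fin d) (Fin d) K)) P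
          = hnSub ((ρ g⁻¹ : Matrix (Fin d) (Fin d) K)) (hnSub ((ρ h⁻¹ : Matrix (Fin d) (Fin d) K)) P)
        rw [key]
        congr 1
        rw [mul_inv_rev, map_mul]
        simp [Matrix.GeneralLinearGroup.coe_mul]
      smul_zero := fun g => map_zero _
      smul_add := fun g => map_add _
      smul_one := fun g => map_one _
      smul_mul := fun g => map_mul _ }
  -- the invariant subalgebra
  let B : Subalgebra K R :=
    { carrier := {P : R | ∀ g : G, hnSub ((ρ g : Matrix (Fin d) (Fin d) K)) P = P}
      mul_mem' := fun {a b} ha hb g => by rw [map_mul, ha g, hb g]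
      add_mem' := fun {a b} ha hb g => by rw [map_add, ha g, hb g]
      algebraMap_mem' := fun r g =>
        (hnSub ((ρ g : Matrix (Fin d) (Fin d) K))).commutes r }
  have memB_iff : ∀ P : R, P ∈ B ↔ ∀ g : G, g • P = P := by
    intro P
    constructor
    · intro h g; exact h g⁻¹
    · intro h g; have := h g⁻¹; rwa [smul_def, inv_inv] at this
  -- every element of R is integral over B
  have hint : ∀ x : R, IsIntegral B x := by
    intro x
    have hcoeff : ∀ c ∈ (prodXSubSMul G R x).coeffs, c ∈ B.toSubring := by
      intro c hc
      obtain ⟨n, _, rfl⟩ := Polynomial.mem_coeffs_iff.1 hc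
      rw [Subalgebra.mem_toSubring, memB_iff]
      intro g
      exact prodXSubSMul.coeff G R x g n
    refine ⟨(prodXSubSMul G R x).toSubring B.toSubring hcoeff, ?_, ?_⟩
    · exact Polynomial.monic_toSubring _ _ _ |>.2 (prodXSubSMul.monic G R x)
    · rw [← prodXSubSMul.eval G R x, Polynomial.eval₂_eq_eval_map]
      congr 1
      have hmap : algebraMap (↥B) R = B.toSubring.subtype := rfl
      rw [hmap]
      exact Polynomial.map_toSubring _ _ _
  haveI : Algebra.IsIntegral B R := ⟨hint⟩
  haveI : Algebra.FiniteType K R := inferInstance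
  haveI : Algebra.FiniteType B R := Algebra.FiniteType.of_restrictScalars_finiteType K B R
  haveI : Module.Finite B R := Algebra.IsIntegral.finite
  -- Artin–Tate
  have hfg : (⊤ : Subalgebra K B).FG := by
    refine fg_of_fg_of_fg K B R ?_ ?_ ?_
    · exact ‹Algebra.FiniteType K R›.out
    · exact Module.finite_def.mp ‹Module.Finite B R›
    · exact Subtype.val_injective
  obtain ⟨t, ht⟩ := hfg
  refine ⟨t.image B.val, ?_, ?_⟩
  · intro Q hQ g
    simp only [Finset.mem_image] at hQ
    obtain ⟨q, _, rfl⟩ := hQ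
    exact q.2 g
  · intro P hP
    have hPB : P ∈ B := hP
    have hmem0 : (⟨P, hPB⟩ : B) ∈ Algebra.adjoin K (t : Set B) := ht ▸ Algebra.mem_top
    have hmem : P ∈ (Algebra.adjoin K (t : Set B)).map B.val := ⟨⟨P, hPB⟩, hmem0, rfl⟩
    rw [AlgHom.map_adjoin] at hmem
    rwa [Finset.coe_image]
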